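/- Let n ≥ 3 and consider an n-gon of perimeter 1 with interior angles αᵢ ∈ [π/2, π) and edge lengths ℓᵢ, and let w > 0 satisfy ℓᵢ ≥ (w/2)(tan(αᵢ/2) + tan(αᵢ₊₁/2)) for all i (indices mod n). Then w ≤ 1/(n·cot(π/n)), i.e., the folded ribbonlength 1/w is at least n·cot(π/n). -/

import Mathlib

open Real Finset

lemma tan_convexOn : ConvexOn ℝ (Set.Ico 0 (Real.pi / 2)) Real.tan := by
  have hint : interior (Set.Ico 0 (Real.pi / 2)) = Set.Ioo 0 (Real.pi / 2) :=
    interior_Ico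
  apply MonotoneOn.convexOn_of_deriv (convex_Ico _ _)
  · apply Real.continuousOn_tan.mono
    intro x hx
    simp only [Set.mem_setOf_eq]
    exact (Real.cos_pos_of_mem_Ioo ⟨by linarith [hx.1, Real.pi_pos], hx.2⟩).ne'
  · rw [hint]
    intro x hx
    exact (Real.differentiableAt_tan.2
      (Real.cos_pos_of_mem_Ioo ⟨by linarith [hx.1, Real.pi_pos], hx.2⟩).ne').differentiableWithinAt
  · rw [hint]
    intro x hx y hy hxy
    rw [Real.deriv_tan, Real.deriv_tan]
    have hcx : 0 < Real.cos x := Real.cos_pos_of_mem_Ioo ⟨by linarith [hx.1, Real.pi_pos], hx.2⟩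
    have hcy : 0 < Real.cos y := Real.cos_pos_of_mem_Ioo ⟨by linarith [hy.1, Real.pi_pos], hy.2⟩
    have hle : Real.cos y ≤ Real.cos x :=
      Real.cos_le_cos_of_nonneg_of_le_pi hx.1.le (by linarith [hy.2, Real.pi_pos]) hxy
    have : Real.cos y ^ 2 ≤ Real.cos x ^ 2 := by nlinarith
    apply one_div_le_one_div_of_le (by positivity) this

/-- For an `n`-gon (`n ≥ 3`) of perimeter 1 with interior angles `αᵢ ∈ [π/2, π)`
and edge lengths `ℓᵢ > 0`, if a width `w > 0` satisfies the non-overlap constraint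
`ℓᵢ ≥ (w/2)(tan (αᵢ/2) + tan (αᵢ₊₁/2))` for all `i` (indices mod `n`), then
`w ≤ 1/(n · cot (π/n))`, i.e. the folded ribbonlength `1/w` is at least
`n · cot (π/n)`. -/
theorem width_le_ngon (n : ℕ) [NeZero n] (hn : 3 ≤ n) (ℓ α : Fin n → ℝ) (w : ℝ) (hw : 0 < w)
    (hℓpos : ∀ i, 0 < ℓ i) (hperim : ∑ i, ℓ i = 1)
    (hα : ∀ i, Real.pi / 2 ≤ α i ∧ α i < Real.pi)
    (hαsum : ∑ i, α i = (n - 2 : ℝ) * Real.pi)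
    (hfold : ∀ i, w / 2 * (Real.tan (α i / 2) + Real.tan (α (i + 1) / 2)) ≤ ℓ i) :
    w ≤ 1 / ((n : ℝ) * Real.cot (Real.pi / n)) ∧
      (n : ℝ) * Real.cot (Real.pi / n) ≤ 1 / w := by
  have hπ := Real.pi_pos
  have hn3 : (3 : ℝ) ≤ (n : ℝ) := by exact_mod_cast hn
  have hnpos : (0 : ℝ) < n := by linarith
  -- cot (π/n) = tan (π/2 - π/n)
  have hcot : Real.cot (Real.pi / n) = Real.tan (Real.pi / 2 - Real.pi / n) := by
    rw [Real.tan_pi_div_two_sub, Real.cot_eq_cos_div_sin, Real.tan_eq_sin_div_cos, inv_div]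
  -- mean angle in the convex set
  have hmean1 : 0 < Real.pi / 2 - Real.pi / n := by
    rw [sub_pos]
    apply div_lt_div_of_pos_left hπ (by norm_num) (by linarith)
  have hmean2 : Real.pi / 2 - Real.pi / n < Real.pi / 2 := by
    have : 0 < Real.pi / n := by positivity
    linarith
  set S := ∑ i, Real.tan (α i / 2) with hS
  -- Jensen: n * tan(mean) ≤ S
  have hjensen : (n : ℝ) * Real.tan (Real.pi / 2 - Real.pi / n) ≤ S := by
    have h := tan_convexOn.map_sum_le (t := Finset.univ) (w := fun _ : Fin n => 1 / (n : ℝ))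
      (p := fun i => α i / 2) (fun i _ => by positivity)
      (by simp [Finset.card_univ])
      (fun i _ => ⟨by linarith [(hα i).1], by linarith [(hα i).2]⟩)
    have hsum : ∑ i : Fin n, (1 / (n : ℝ)) • (α i / 2) = Real.pi / 2 - Real.pi / n := by
      simp only [smul_eq_mul, ← Finset.mul_sum]
      rw [show ∑ i, α i / 2 = (∑ i, α i) / 2 by rw [Finset.sum_div], hαsum]
      field_simp
    rw [hsum] at h
    simp only [smul_eq_mul, ← Finset.mul_sum] at h
    calc (n : ℝ) * Real.tan (Real.pi / 2 - Real.pi / n)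
        ≤ (n : ℝ) * (1 / (n : ℝ) * ∑ i, Real.tan (α i / 2)) :=
          mul_le_mul_of_nonneg_left h hnpos.le
      _ = S := by field_simp; exact hS.symm
  -- from folding: w * S ≤ 1
  have hreidx : ∑ i : Fin n, Real.tan (α (i + 1) / 2) = S :=
    Fintype.sum_equiv (Equiv.addRight (1 : Fin n)) _ _ (fun i => rfl)
  have hwS : w * S ≤ 1 := by
    have h := Finset.sum_le_sum (fun i (_ : i ∈ Finset.univ) => hfold i)
    rw [hperim] at h
    calc w * S = w / 2 * (S + S) := by ring
      _ = ∑ i : Fin n, w / 2 * (Real.tan (α i / 2) + Real.tan (α (i + 1) / 2)) := by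
          rw [← Finset.mul_sum, Finset.sum_add_distrib, hreidx]
      _ ≤ 1 := h
  -- positivity of n * cot(π/n)
  have hCpos : 0 < (n : ℝ) * Real.cot (Real.pi / n) := by
    rw [hcot]
    exact mul_pos hnpos (Real.tan_pos_of_pos_of_lt_pi_div_two hmean1 hmean2)
  have hCS : (n : ℝ) * Real.cot (Real.pi / n) ≤ S := by rw [hcot]; exact hjensen
  have hwC : w * ((n : ℝ) * Real.cot (Real.pi / n)) ≤ 1 :=
    le_trans (by nlinarith) hwS
  constructor
  · rw [le_div_iff₀ hCpos]; linarith
  · rw [le_div_iff₀ hw]; linarith
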